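/- Let h > 0 and let (τ, μ) be a global solution of the rotator ODE system with lim_{s→±∞} τ(s) = ±∞ and lim_{s→±∞} μ(s) = ∓∞. Then the function ν := −τ/μ is bounded on the complement of some compact interval, and its derivative satisfies ν' = −(μ + k·r²)/μ² wherever μ ≠ 0. -/

import Mathlib

open Filter

/-- The curvature function of the generating curve of an `h`-pitched helicoidal
rotator to MCF in `ℍ²×ℝ`. -/
noncomputable def kF (h τ μ : ℝ) : ℝ :=
  (2 * (τ ^ 2 + h ^ 2 * (1 + μ ^ 2)) * τ + (h ^ 2 - 1) * (1 + μ ^ 2) * μ) /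
    ((1 + (τ ^ 2 + μ ^ 2)) * (h ^ 2 + (τ ^ 2 + μ ^ 2)))

/-- `(τ, μ)` is a (global) solution of the rotator ODE system
`τ′ = 1 + kμ`, `μ′ = −kτ`. -/
def IsSol (h : ℝ) (τ μ : ℝ → ℝ) : Prop :=
  ∀ s : ℝ,
    HasDerivAt τ (1 + kF h (τ s) (μ s) * μ s) s ∧
    HasDerivAt μ (-(kF h (τ s) (μ s) * τ s)) s

lemma kF_odd (h a b : ℝ) : kF h (-a) (-b) = - kF h a b := by
  unfold kF; rw [← neg_div]; congr 1 <;> ring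

lemma key (h t m : ℝ) (hh : 0 < h) (hm : 1 ≤ m) (ht : m ≤ t) :
    0 < -m + kF h t (-m) * (t ^ 2 + (-m) ^ 2) := by
  have hd : (0:ℝ) < (1 + (t ^ 2 + m ^ 2)) * (h ^ 2 + (t ^ 2 + m ^ 2)) := by positivity
  have e : -m + kF h t (-m) * (t ^ 2 + (-m) ^ 2) =
      ((2 * (t ^ 2 + h ^ 2 * (1 + m ^ 2)) * t - (h ^ 2 - 1) * (1 + m ^ 2) * m) *
        (t ^ 2 + m ^ 2) - m * ((1 + (t ^ 2 + m ^ 2)) * (h ^ 2 + (t ^ 2 + m ^ 2)))) /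
      ((1 + (t ^ 2 + m ^ 2)) * (h ^ 2 + (t ^ 2 + m ^ 2))) := by
    unfold kF
    field_simp
    ring
  rw [e]
  apply div_pos _ hd
  have hB : (0:ℝ) ≤ (1 + m ^ 2) * (2 * t - m) * (t ^ 2 + m ^ 2) - m * (1 + (t ^ 2 + m ^ 2)) := by
    have htm : (0:ℝ) ≤ t - m := by linarith
    have hr : (0:ℝ) ≤ t ^ 2 + m ^ 2 := by positivity
    have h1m : (0:ℝ) ≤ 1 + m ^ 2 := by positivity
    have hmr : (0:ℝ) ≤ m ^ 2 * (t ^ 2 + m ^ 2) - 1 := by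
      nlinarith [mul_nonneg (by linarith : (0:ℝ) ≤ m - 1) (by positivity : (0:ℝ) ≤ m ^ 3 + m ^ 2 + m + 1), sq_nonneg (m * t)]
    nlinarith [mul_nonneg (mul_nonneg h1m htm) hr, mul_nonneg htm hr,
      mul_nonneg (mul_nonneg htm (sq_nonneg m)) hr,
      mul_nonneg (by linarith : (0:ℝ) ≤ m) hmr]
  nlinarith [mul_pos (mul_pos (by nlinarith : (0:ℝ) < t ^ 2) (by nlinarith : (0:ℝ) < t ^ 2 + m ^ 2)) (by nlinarith : (0:ℝ) < 2 * t - m), mul_nonneg (sq_nonneg h) hB]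

lemma nu_hasDeriv (h : ℝ) (τ μ : ℝ → ℝ) (hsol : IsSol h τ μ) (s : ℝ) (hμ : μ s ≠ 0) :
    HasDerivAt (fun s => (-(τ s)) / μ s)
      (-((μ s + kF h (τ s) (μ s) * (τ s ^ 2 + μ s ^ 2)) / (μ s) ^ 2)) s := by
  have H := ((hsol s).1.neg.div (hsol s).2 hμ)
  refine H.congr_deriv ?_
  field_simp
  simp only [Pi.neg_apply]
  ring

lemma aux (h : ℝ) (hh : 0 < h) (τ μ : ℝ → ℝ) (hsol : IsSol h τ μ)
    (hτtop : Tendsto τ atTop atTop) (hμtop : Tendsto μ atTop atBot) :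
    ∃ a C : ℝ, ∀ s, a ≤ s → |(-(τ s)) / μ s| ≤ C := by
  obtain ⟨a, ha⟩ := Filter.eventually_atTop.1
    ((hτtop.eventually_ge_atTop 1).and (hμtop.eventually_le_atBot (-1)))
  set ν : ℝ → ℝ := fun s => (-(τ s)) / μ s with hν
  set B : ℝ := max (ν a) 1 with hB
  refine ⟨a, B, ?_⟩
  intro s hs
  obtain ⟨hτs, hμs⟩ := ha s hs
  have hμ0 : ∀ x, a ≤ x → μ x ≠ 0 := fun x hx => by
    have := (ha x hx).2; intro h0; rw [h0] at this; linarith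
  have hνnn : 0 ≤ ν s := by
    rw [div_nonneg_iff]; right; constructor <;> linarith
  rw [abs_of_nonneg hνnn]
  by_contra hc
  push_neg at hc
  have has : a < s := by
    rcases eq_or_lt_of_le hs with h' | h'
    · exact absurd hc (not_lt.2 (by rw [← h']; exact le_max_left _ _))
    · exact h'
  -- continuity of ν on [a, s]
  have hνcont : ContinuousOn ν (Set.Icc a s) := fun x hx =>
    (nu_hasDeriv h τ μ hsol x (hμ0 x hx.1)).continuousAt.continuousWithinAt
  set S : Set ℝ := Set.Icc a s ∩ ν ⁻¹' Set.Iic B with hS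
  have hSclosed : IsClosed S := hνcont.preimage_isClosed_of_isClosed isClosed_Icc isClosed_Iic
  have haS : a ∈ S := ⟨⟨le_refl a, le_of_lt has⟩, show ν a ≤ B from le_max_left _ _⟩
  have hbdd : BddAbove S := (bddAbove_Icc).mono Set.inter_subset_left
  set t := sSup S with htdef
  have htS : t ∈ S := hSclosed.csSup_mem ⟨a, haS⟩ hbdd
  have hts : t < s := by
    rcases eq_or_lt_of_le htS.1.2 with h' | h'
    · exfalso; have := htS.2; rw [h'] at this; exact absurd this (not_le.2 hc)
    · exact h'
  have hgt : ∀ x ∈ Set.Ioo t s, B < ν x := by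
    intro x hx
    by_contra hle
    push_neg at hle
    have hxS : x ∈ S := ⟨⟨le_trans htS.1.1 (le_of_lt hx.1), le_of_lt hx.2⟩, hle⟩
    exact absurd (le_csSup hbdd hxS) (not_le.2 hx.1)
  have hanti : StrictAntiOn ν (Set.Icc t s) := by
    apply strictAntiOn_of_deriv_neg (convex_Icc t s)
      (hνcont.mono (Set.Icc_subset_Icc htS.1.1 (le_refl s)))
    intro x hx
    rw [interior_Icc] at hx
    have hxa : a ≤ x := le_trans htS.1.1 (le_of_lt hx.1)
    have hμx : μ x ≤ -1 := (ha x hxa).2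
    have hνx : 1 < ν x := lt_of_le_of_lt (le_max_right _ _) (hgt x hx)
    set m := -μ x with hm
    have hm1 : 1 ≤ m := by simp only [hm]; linarith
    have hmt : m ≤ τ x := by
      have hμneg : μ x < 0 := by linarith
      have := (one_lt_div_of_neg hμneg).1 hνx
      simp only [hm]; linarith
    have hk := key h (τ x) m hh hm1 hmt
    have hμxm : μ x = -m := by simp [hm]
    have hnum : 0 < μ x + kF h (τ x) (μ x) * (τ x ^ 2 + μ x ^ 2) := by
      rw [hμxm]; exact hk
    rw [(nu_hasDeriv h τ μ hsol x (hμ0 x hxa)).deriv]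
    have : 0 < (μ x + kF h (τ x) (μ x) * (τ x ^ 2 + μ x ^ 2)) / (μ x) ^ 2 :=
      div_pos hnum (by nlinarith [sq_nonneg (μ x)])
    linarith
  have := hanti ⟨le_refl t, le_of_lt hts⟩ ⟨le_of_lt hts, le_refl s⟩ hts
  have htB : ν t ≤ B := htS.2
  linarith

/-- along a global solution with `τ → ±∞` and `μ → ∓∞` as `s → ±∞`,
the function `ν = −τ/μ` is bounded outside some compact interval, and
`ν′ = −(μ + k r²)/μ²` wherever `μ ≠ 0`. -/
theorem nu_bounded_and_derivative (h : ℝ) (hh : 0 < h) (τ μ : ℝ → ℝ)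
    (hsol : IsSol h τ μ)
    (hτtop : Tendsto τ atTop atTop) (hτbot : Tendsto τ atBot atBot)
    (hμtop : Tendsto μ atTop atBot) (hμbot : Tendsto μ atBot atTop) :
    (∃ a b C : ℝ, ∀ s : ℝ, s ∉ Set.Icc a b → |(-(τ s)) / μ s| ≤ C) ∧
    (∀ s : ℝ, μ s ≠ 0 →
      deriv (fun s => (-(τ s)) / μ s) s =
        -((μ s + kF h (τ s) (μ s) * (τ s ^ 2 + μ s ^ 2)) / (μ s) ^ 2)) := by
  constructor
  · obtain ⟨a₁, C₁, h1⟩ := aux h hh τ μ hsol hτtop hμtop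
    set σ : ℝ → ℝ := fun s => -τ (-s) with hσdef
    set ρ : ℝ → ℝ := fun s => -μ (-s) with hρdef
    have hτσ : ∀ s, τ (-s) = -(σ s) := fun s => by simp [hσdef]
    have hμρ : ∀ s, μ (-s) = -(ρ s) := fun s => by simp [hρdef]
    have hsolr : IsSol h σ ρ := by
      intro s
      obtain ⟨hτ', hμ'⟩ := hsol (-s)
      have hkodd : kF h (τ (-s)) (μ (-s)) = - kF h (σ s) (ρ s) := by
        rw [hτσ, hμρ, kF_odd]
      constructor
      · have H := (hτ'.comp s (hasDerivAt_neg s)).neg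
        refine H.congr_deriv ?_
        rw [hkodd, hμρ]; ring
      · have H := (hμ'.comp s (hasDerivAt_neg s)).neg
        refine H.congr_deriv ?_
        rw [hkodd, hτσ]; ring
    have hσtop : Tendsto σ atTop atTop :=
      tendsto_neg_atBot_atTop.comp (hτbot.comp tendsto_neg_atTop_atBot)
    have hρtop : Tendsto ρ atTop atBot :=
      tendsto_neg_atTop_atBot.comp (hμbot.comp tendsto_neg_atTop_atBot)
    obtain ⟨a₂, C₂, h2⟩ := aux h hh σ ρ hsolr hσtop hρtop
    refine ⟨min (-a₂) a₁, max (-a₂) a₁, max C₁ C₂, ?_⟩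
    intro s hsI
    rw [Set.mem_Icc, not_and_or, not_le, not_le] at hsI
    rcases hsI with hlt | hgt
    · have hs2 : a₂ ≤ -s := by
        have := lt_min_iff.1 hlt
        linarith [this.1]
      have := h2 (-s) hs2
      have e : (-(σ (-s))) / ρ (-s) = (-(τ s)) / μ s := by
        simp [hσdef, hρdef, div_neg, neg_div]
      rw [e] at this
      exact le_trans this (le_max_right _ _)
    · have hs1 : a₁ ≤ s := le_of_lt (lt_of_le_of_lt (le_max_right _ _) hgt)
      exact le_trans (h1 s hs1) (le_max_left _ _)
  · intro s hμ
    exact (nu_hasDeriv h τ μ hsol s hμ).deriv
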